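/- Let p_α, p_β, p_γ be real numbers with p_ε = 1 − p_α − p_β − p_γ, and suppose the three quantities x₁ = 1 − 2(p_α + p_γ), x₂ = 1 − 2(p_β + p_γ), x₃ = 1 − 2(p_α + p_β) are all positive. Define q_α = (1/4)·ln(x₂/(x₁x₃)), q_β = (1/4)·ln(x₁/(x₂x₃)), q_γ = (1/4)·ln(x₃/(x₁x₂)), K = q_α + q_β + q_γ, and let R be the matrix of K3ST form with parameters (−K, q_α, q_β, q_γ). Then exp(R) equals the K3ST-form matrix with parameters (p_ε, p_α, p_β, p_γ). -/

import Mathlib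

set_option maxHeartbeats 2000000

/-- A 4×4 real matrix of K3ST form with parameters `(a, b, c, d)`. -/
def K3ST (a b c d : ℝ) : Matrix (Fin 4) (Fin 4) ℝ :=
  !![a, b, c, d;
     b, a, d, c;
     c, d, a, b;
     d, c, b, a]

/-- The Hadamard matrix diagonalizing K3ST matrices. -/
def Hmat : Matrix (Fin 4) (Fin 4) ℝ :=
  !![1, 1, 1, 1;
     1, 1, -1, -1;
     1, -1, 1, -1;
     1, -1, -1, 1]

lemma diag4 (w : Fin 4 → ℝ) :
    Matrix.diagonal w = !![w 0, 0, 0, 0; 0, w 1, 0, 0; 0, 0, w 2, 0; 0, 0, 0, w 3] := by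
  ext i j
  fin_cases i <;> fin_cases j <;>
    · simp [Matrix.diagonal_apply, Fin.ext_iff, Matrix.vecHead, Matrix.vecTail]
      try (intro h; exact absurd h (by decide))

lemma hHH : Hmat * ((4 : ℝ)⁻¹ • Hmat) = 1 := by
  ext i j
  fin_cases i <;> fin_cases j <;>
    · simp [Hmat, Matrix.mul_apply, Fin.sum_univ_four, Matrix.one_apply, Fin.ext_iff,
        Matrix.vecHead, Matrix.vecTail]
      try norm_num
      try rw [if_neg (by decide)]

lemma hHH' : ((4 : ℝ)⁻¹ • Hmat) * Hmat = 1 := by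
  rw [Matrix.smul_mul, ← Matrix.mul_smul, hHH]

lemma Hmat_inv : Hmat⁻¹ = (4 : ℝ)⁻¹ • Hmat := Matrix.inv_eq_right_inv hHH

lemma Hmat_isUnit : IsUnit Hmat := ⟨⟨Hmat, (4 : ℝ)⁻¹ • Hmat, hHH, hHH'⟩, rfl⟩

lemma exp_K3ST (a b c d : ℝ) :
    NormedSpace.exp (K3ST a b c d) =
      K3ST ((Real.exp (a+b+c+d) + Real.exp (a+b-c-d) + Real.exp (a-b+c-d) + Real.exp (a-b-c+d))/4)
           ((Real.exp (a+b+c+d) + Real.exp (a+b-c-d) - Real.exp (a-b+c-d) - Real.exp (a-b-c+d))/4)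
           ((Real.exp (a+b+c+d) - Real.exp (a+b-c-d) + Real.exp (a-b+c-d) - Real.exp (a-b-c+d))/4)
           ((Real.exp (a+b+c+d) - Real.exp (a+b-c-d) - Real.exp (a-b+c-d) + Real.exp (a-b-c+d))/4) := by
  have hm : K3ST a b c d =
      Hmat * (Matrix.diagonal ![a+b+c+d, a+b-c-d, a-b+c-d, a-b-c+d]) * Hmat⁻¹ := by
    rw [Hmat_inv, diag4]
    ext i j
    fin_cases i <;> fin_cases j <;>
      · simp [K3ST, Hmat, Matrix.mul_apply, Fin.sum_univ_four, Matrix.vecHead, Matrix.vecTail]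
        try ring
  rw [hm, Matrix.exp_conj Hmat _ Hmat_isUnit, Matrix.exp_diagonal, Hmat_inv, Pi.exp_def,
    diag4]
  ext i j
  fin_cases i <;> fin_cases j <;>
    · simp [K3ST, Hmat, Matrix.mul_apply, Fin.sum_univ_four, Matrix.vecHead, Matrix.vecTail,
        ← Real.exp_eq_exp_ℝ]
      try ring

theorem stmt4 (pα pβ pγ : ℝ)
    (h₁ : 0 < 1 - 2 * (pα + pγ)) (h₂ : 0 < 1 - 2 * (pβ + pγ)) (h₃ : 0 < 1 - 2 * (pα + pβ)) :
    let x₁ : ℝ := 1 - 2 * (pα + pγ)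
    let x₂ : ℝ := 1 - 2 * (pβ + pγ)
    let x₃ : ℝ := 1 - 2 * (pα + pβ)
    let qα : ℝ := (1 / 4) * Real.log (x₂ / (x₁ * x₃))
    let qβ : ℝ := (1 / 4) * Real.log (x₁ / (x₂ * x₃))
    let qγ : ℝ := (1 / 4) * Real.log (x₃ / (x₁ * x₂))
    NormedSpace.exp (K3ST (-(qα + qβ + qγ)) qα qβ qγ) =
      K3ST (1 - pα - pβ - pγ) pα pβ pγ := by
  intro x₁ x₂ x₃ qα qβ qγ
  have hx₁ : (0:ℝ) < x₁ := h₁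
  have hx₂ : (0:ℝ) < x₂ := h₂
  have hx₃ : (0:ℝ) < x₃ := h₃
  have l₁ : Real.log (x₂ / (x₁ * x₃)) = Real.log x₂ - Real.log x₁ - Real.log x₃ := by
    rw [Real.log_div hx₂.ne' (by positivity), Real.log_mul hx₁.ne' hx₃.ne']; ring
  have l₂ : Real.log (x₁ / (x₂ * x₃)) = Real.log x₁ - Real.log x₂ - Real.log x₃ := by
    rw [Real.log_div hx₁.ne' (by positivity), Real.log_mul hx₂.ne' hx₃.ne']; ring
  have l₃ : Real.log (x₃ / (x₁ * x₂)) = Real.log x₃ - Real.log x₁ - Real.log x₂ := by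
    rw [Real.log_div hx₃.ne' (by positivity), Real.log_mul hx₁.ne' hx₂.ne']; ring
  rw [exp_K3ST]
  have e0 : -(qα + qβ + qγ) + qα + qβ + qγ = 0 := by ring
  have e1 : -(qα + qβ + qγ) + qα - qβ - qγ = Real.log x₂ := by
    show -((1/4) * Real.log (x₂/(x₁*x₃)) + (1/4) * Real.log (x₁/(x₂*x₃)) +
        (1/4) * Real.log (x₃/(x₁*x₂))) + (1/4) * Real.log (x₂/(x₁*x₃)) -
        (1/4) * Real.log (x₁/(x₂*x₃)) - (1/4) * Real.log (x₃/(x₁*x₂)) = Real.log x₂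
    rw [l₁, l₂, l₃]; ring
  have e2 : -(qα + qβ + qγ) - qα + qβ - qγ = Real.log x₁ := by
    show -((1/4) * Real.log (x₂/(x₁*x₃)) + (1/4) * Real.log (x₁/(x₂*x₃)) +
        (1/4) * Real.log (x₃/(x₁*x₂))) - (1/4) * Real.log (x₂/(x₁*x₃)) +
        (1/4) * Real.log (x₁/(x₂*x₃)) - (1/4) * Real.log (x₃/(x₁*x₂)) = Real.log x₁
    rw [l₁, l₂, l₃]; ring
  have e3 : -(qα + qβ + qγ) - qα - qβ + qγ = Real.log x₃ := by
    show -((1/4) * Real.log (x₂/(x₁*x₃)) + (1/4) * Real.log (x₁/(x₂*x₃)) +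
        (1/4) * Real.log (x₃/(x₁*x₂))) - (1/4) * Real.log (x₂/(x₁*x₃)) -
        (1/4) * Real.log (x₁/(x₂*x₃)) + (1/4) * Real.log (x₃/(x₁*x₂)) = Real.log x₃
    rw [l₁, l₂, l₃]; ring
  rw [e0, e1, e2, e3, Real.exp_zero, Real.exp_log hx₂, Real.exp_log hx₁, Real.exp_log hx₃]
  have a1 : ((1:ℝ) + x₂ + x₁ + x₃) / 4 = 1 - pα - pβ - pγ := by
    show (1 + (1 - 2*(pβ+pγ)) + (1 - 2*(pα+pγ)) + (1 - 2*(pα+pβ)))/4 = 1 - pα - pβ - pγ; ring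
  have a2 : ((1:ℝ) + x₂ - x₁ - x₃) / 4 = pα := by
    show (1 + (1 - 2*(pβ+pγ)) - (1 - 2*(pα+pγ)) - (1 - 2*(pα+pβ)))/4 = pα; ring
  have a3 : ((1:ℝ) - x₂ + x₁ - x₃) / 4 = pβ := by
    show (1 - (1 - 2*(pβ+pγ)) + (1 - 2*(pα+pγ)) - (1 - 2*(pα+pβ)))/4 = pβ; ring
  have a4 : ((1:ℝ) - x₂ - x₁ + x₃) / 4 = pγ := by
    show (1 - (1 - 2*(pβ+pγ)) - (1 - 2*(pα+pγ)) + (1 - 2*(pα+pβ)))/4 = pγ; ring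
  rw [a1, a2, a3, a4]
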